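/- If ℰ and ℱ are countable partitions of a space such that each element of ℰ intersects at most k elements of ℱ and each element of ℱ intersects at most k elements of ℰ, then for every probability measure μ, |H(μ, ℰ) − H(μ, ℱ)| ≤ 2 log k. -/

import Mathlib

open MeasureTheory

/-- `ent p = -p log₂ p`, the entropy summand (base-2 logarithm). -/
noncomputable def ent (p : ℝ) : ℝ := -(p * Real.logb 2 p)

lemma ent_zero : ent 0 = 0 := by simp [ent]

lemma ent_nonneg {p : ℝ} (h0 : 0 ≤ p) (h1 : p ≤ 1) : 0 ≤ ent p := by
  have := Real.logb_nonpos (b := 2) (by norm_num) h0 h1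
  have : p * Real.logb 2 p ≤ 0 := mul_nonpos_of_nonneg_of_nonpos h0 this
  simpa [ent] using this

lemma ent_eq (p : ℝ) : ent p = p * (-(Real.logb 2 p)) := by rw [ent]; ring

/-- subadditivity of `ent` over a finite sum of nonnegative reals -/
lemma ent_sum_le {s : Finset ℕ} {p : ℕ → ℝ} (hp : ∀ j ∈ s, 0 ≤ p j) :
    ent (∑ j ∈ s, p j) ≤ ∑ j ∈ s, ent (p j) := by
  set S := ∑ j ∈ s, p j with hS
  have hkey : ent S = ∑ j ∈ s, p j * (-(Real.logb 2 S)) := by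
    rw [ent_eq, hS, Finset.sum_mul]
  rw [hkey]
  refine Finset.sum_le_sum (fun j hj => ?_)
  rcases eq_or_lt_of_le (hp j hj) with h0 | hpos
  · rw [← h0, ent_zero, zero_mul]
  · rw [ent_eq]
    refine mul_le_mul_of_nonneg_left (neg_le_neg ?_) hpos.le
    exact Real.logb_le_logb_of_le (by norm_num) hpos
      (Finset.single_le_sum hp hj)

/-- the entropy of at most `k` nonnegative reals is at most the entropy of their sum
plus `(sum) * log₂ k`. -/
lemma sum_ent_le {s : Finset ℕ} {p : ℕ → ℝ} (hp : ∀ i ∈ s, 0 ≤ p i) {k : ℕ} (hk : 1 ≤ k)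
    (hcard : s.card ≤ k) :
    ∑ i ∈ s, ent (p i) ≤ ent (∑ i ∈ s, p i) + (∑ i ∈ s, p i) * Real.logb 2 k := by
  set q := ∑ i ∈ s, p i with hq
  have hq0 : 0 ≤ q := Finset.sum_nonneg hp
  have hk0 : (0:ℝ) < k := by exact_mod_cast Nat.lt_of_lt_of_le Nat.zero_lt_one hk
  have hlog2 : 0 < Real.log 2 := Real.log_pos (by norm_num)
  rcases eq_or_lt_of_le hq0 with h0 | hqpos
  · have hz : ∀ i ∈ s, p i = 0 := (Finset.sum_eq_zero_iff_of_nonneg hp).mp h0.symm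
    have hL : ∑ i ∈ s, ent (p i) = 0 :=
      Finset.sum_eq_zero (fun i hi => by rw [hz i hi, ent_zero])
    rw [hL, ← h0, ent_zero]
    simp
  · have key : ∀ i ∈ s, ent (p i) + p i * Real.logb 2 q - p i * Real.logb 2 k ≤
        (q / k - p i) / Real.log 2 := by
      intro i hi
      rcases eq_or_lt_of_le (hp i hi) with h0 | hpos
      · rw [← h0]
        simp only [ent_zero, zero_mul, add_zero, sub_zero, zero_add, sub_zero]
        positivity
      · have ht : 0 < q / (p i * k) := by positivity
        have h1 : Real.logb 2 (q / (p i * k)) =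
            Real.logb 2 q - Real.logb 2 (p i) - Real.logb 2 k := by
          rw [Real.logb_div (ne_of_gt hqpos) (by positivity),
            Real.logb_mul (ne_of_gt hpos) (ne_of_gt hk0)]
          ring
        have h2 : Real.logb 2 (q / (p i * k)) ≤ (q / (p i * k) - 1) / Real.log 2 := by
          rw [Real.logb]
          exact div_le_div_of_nonneg_right (Real.log_le_sub_one_of_pos ht) hlog2.le
        calc ent (p i) + p i * Real.logb 2 q - p i * Real.logb 2 k
            = p i * (Real.logb 2 q - Real.logb 2 (p i) - Real.logb 2 k) := by
              rw [ent]; ring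
          _ = p i * Real.logb 2 (q / (p i * k)) := by rw [h1]
          _ ≤ p i * ((q / (p i * k) - 1) / Real.log 2) :=
              mul_le_mul_of_nonneg_left h2 hpos.le
          _ = (q / k - p i) / Real.log 2 := by
              field_simp
    have hsumkey : ∑ i ∈ s, (ent (p i) + p i * Real.logb 2 q - p i * Real.logb 2 k) ≤
        ∑ i ∈ s, (q / k - p i) / Real.log 2 := Finset.sum_le_sum key
    have hrhs : ∑ i ∈ s, (q / k - p i) / Real.log 2 ≤ 0 := by
      rw [← Finset.sum_div]
      have hnum : ∑ i ∈ s, (q / k - p i) ≤ 0 := by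
        rw [Finset.sum_sub_distrib, Finset.sum_const, nsmul_eq_mul, ← hq]
        have : (s.card : ℝ) * (q / k) ≤ (k : ℝ) * (q / k) :=
          mul_le_mul_of_nonneg_right (by exact_mod_cast hcard) (by positivity)
        have hkq : (k : ℝ) * (q / k) = q := by field_simp
        linarith
      exact div_nonpos_of_nonpos_of_nonneg hnum hlog2.le
    have hlhs : ∑ i ∈ s, (ent (p i) + p i * Real.logb 2 q - p i * Real.logb 2 k) =
        (∑ i ∈ s, ent (p i)) + q * Real.logb 2 q - q * Real.logb 2 k := by
      rw [Finset.sum_sub_distrib, Finset.sum_add_distrib, ← Finset.sum_mul, ← Finset.sum_mul,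
        ← hq]
    rw [hlhs] at hsumkey
    have h := hsumkey.trans hrhs
    rw [ent]
    linarith

lemma toReal_le_one {X : Type*} [MeasurableSpace X] (μ : Measure X)
    [IsProbabilityMeasure μ] (s : Set X) : (μ s).toReal ≤ 1 := by
  have h := prob_le_one (μ := μ) (s := s)
  have := ENNReal.toReal_mono ENNReal.one_ne_top h
  simpa using this

/-- One-sided key lemma: `H(μ,ℰ) ≤ H(μ,ℱ) + log₂ k`, together with transfer of
summability, assuming the `ℱ`-side entropy series converges. -/
lemma entropy_key
    {X : Type*} [MeasurableSpace X] (μ : Measure X) [IsProbabilityMeasure μ]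
    (E F : ℕ → Set X)
    (hEmeas : ∀ i, MeasurableSet (E i)) (hFmeas : ∀ j, MeasurableSet (F j))
    (hEdisj : Pairwise (Function.onFun Disjoint E))
    (hFdisj : Pairwise (Function.onFun Disjoint F))
    (hEcover : (⋃ i, E i) = Set.univ) (hFcover : (⋃ j, F j) = Set.univ)
    (k : ℕ) (hk : 1 ≤ k)
    (hEF : ∀ i, ∃ s : Finset ℕ, s.card ≤ k ∧ ∀ j, (E i ∩ F j).Nonempty → j ∈ s)
    (hFE : ∀ j, ∃ s : Finset ℕ, s.card ≤ k ∧ ∀ i, (E i ∩ F j).Nonempty → i ∈ s)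
    (hsum : Summable (fun j => ent ((μ (F j)).toReal))) :
    Summable (fun i => ent ((μ (E i)).toReal)) ∧
      (∑' i, ent ((μ (E i)).toReal)) ≤ (∑' j, ent ((μ (F j)).toReal)) + Real.logb 2 k := by
  classical
  choose sE hsEcard hsE using hEF
  choose sF hsFcard hsF using hFE
  set p : ℕ × ℕ → ℝ := fun ij => ent ((μ (E ij.1 ∩ F ij.2)).toReal) with hpdef
  have hzero_row : ∀ i j, j ∉ sE i → μ (E i ∩ F j) = 0 := by
    intro i j hj
    have : E i ∩ F j = ∅ := by
      by_contra h
      exact hj (hsE i j (Set.nonempty_iff_ne_empty.mpr h))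
    simp [this]
  have hzero_col : ∀ i j, i ∉ sF j → μ (E i ∩ F j) = 0 := by
    intro i j hi
    have : E i ∩ F j = ∅ := by
      by_contra h
      exact hi (hsF j i (Set.nonempty_iff_ne_empty.mpr h))
    simp [this]
  have hp_nonneg : ∀ ij, 0 ≤ p ij := fun ij =>
    ent_nonneg ENNReal.toReal_nonneg (toReal_le_one μ _)
  -- row decomposition of measures
  have hrow : ∀ i, (μ (E i)).toReal = ∑ j ∈ sE i, (μ (E i ∩ F j)).toReal := by
    intro i
    have h1 : E i = ⋃ j, E i ∩ F j := by
      rw [← Set.inter_iUnion, hFcover, Set.inter_univ]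
    have h2 : μ (E i) = ∑' j, μ (E i ∩ F j) := by
      conv_lhs => rw [h1]
      exact measure_iUnion
        (fun a b hab => ((hFdisj hab).mono Set.inter_subset_right Set.inter_subset_right))
        (fun j => (hEmeas i).inter (hFmeas j))
    rw [h2, tsum_eq_sum (fun j hj => hzero_row i j hj),
      ENNReal.toReal_sum (fun j _ => measure_ne_top μ _)]
  -- column decomposition of measures
  have hcol : ∀ j, (μ (F j)).toReal = ∑ i ∈ sF j, (μ (E i ∩ F j)).toReal := by
    intro j
    have h1 : F j = ⋃ i, E i ∩ F j := by
      rw [← Set.iUnion_inter, hEcover, Set.univ_inter]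
    have h2 : μ (F j) = ∑' i, μ (E i ∩ F j) := by
      conv_lhs => rw [h1]
      exact measure_iUnion
        (fun a b hab => ((hEdisj hab).mono Set.inter_subset_left Set.inter_subset_left))
        (fun i => (hEmeas i).inter (hFmeas j))
    rw [h2, tsum_eq_sum (fun i hi => hzero_col i j hi),
      ENNReal.toReal_sum (fun i _ => measure_ne_top μ _)]
  -- row sums of the joint entropy terms
  have hrow_tsum : ∀ i, (∑' j, p (i, j)) = ∑ j ∈ sE i, p (i, j) := by
    intro i
    exact tsum_eq_sum (fun j hj => by simp [hpdef, hzero_row i j hj, ent_zero])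
  have hcol_tsum : ∀ j, (∑' i, p (i, j)) = ∑ i ∈ sF j, p (i, j) := by
    intro j
    exact tsum_eq_sum (fun i hi => by simp [hpdef, hzero_col i j hi, ent_zero])
  have hent_row : ∀ i, ent ((μ (E i)).toReal) ≤ ∑' j, p (i, j) := by
    intro i
    rw [hrow_tsum i, hrow i]
    exact ent_sum_le (fun j _ => ENNReal.toReal_nonneg)
  have hcol_le : ∀ j, (∑' i, p (i, j)) ≤
      ent ((μ (F j)).toReal) + (μ (F j)).toReal * Real.logb 2 k := by
    intro j
    rw [hcol_tsum j, hcol j]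
    exact sum_ent_le (fun i _ => ENNReal.toReal_nonneg) hk (hsFcard j)
  -- summability facts
  have hq_summable : Summable (fun j => (μ (F j)).toReal) := by
    apply ENNReal.summable_toReal
    rw [← measure_iUnion hFdisj hFmeas, hFcover]
    exact measure_ne_top μ _
  have hqsum : (∑' j, (μ (F j)).toReal) = 1 := by
    rw [← ENNReal.tsum_toReal_eq (fun j => measure_ne_top μ _),
      ← measure_iUnion hFdisj hFmeas, hFcover, measure_univ, ENNReal.toReal_one]
  have hbound_summable :
      Summable (fun j => ent ((μ (F j)).toReal) + (μ (F j)).toReal * Real.logb 2 k) :=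
    hsum.add (hq_summable.mul_right _)
  have hswap_summable : Summable (fun ji : ℕ × ℕ => p (ji.2, ji.1)) := by
    apply (summable_prod_of_nonneg (fun _ => hp_nonneg _)).mpr
    constructor
    · intro j
      exact summable_of_ne_finset_zero (s := sF j)
        (fun i hi => by simp [hpdef, hzero_col i j hi, ent_zero])
    · refine Summable.of_nonneg_of_le (fun j => tsum_nonneg (fun i => hp_nonneg _))
        (fun j => hcol_le j) hbound_summable
  have hp_summable : Summable p := by
    have := hswap_summable.prod_symm
    simpa using this
  have hrows_summable : Summable (fun i => ∑' j, p (i, j)) := hp_summable.prod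
  have hE_summable : Summable (fun i => ent ((μ (E i)).toReal)) :=
    Summable.of_nonneg_of_le
      (fun i => ent_nonneg ENNReal.toReal_nonneg (toReal_le_one μ _))
      hent_row hrows_summable
  refine ⟨hE_summable, ?_⟩
  have hcols_summable : Summable (fun j => ∑' i, p (i, j)) := hswap_summable.prod
  calc (∑' i, ent ((μ (E i)).toReal)) ≤ ∑' i, ∑' j, p (i, j) :=
        Summable.tsum_le_tsum hent_row hE_summable hrows_summable
    _ = ∑' ij : ℕ × ℕ, p ij := (Summable.tsum_prod hp_summable).symm
    _ = ∑' j, ∑' i, p (i, j) := by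
        rw [Summable.tsum_prod hp_summable]
        exact (Summable.tsum_comm' (f := fun i j => p (i, j)) hp_summable hp_summable.prod_factor
          hp_summable.prod_symm.prod_factor).symm
    _ ≤ ∑' j, (ent ((μ (F j)).toReal) + (μ (F j)).toReal * Real.logb 2 k) :=
        Summable.tsum_le_tsum hcol_le hcols_summable hbound_summable
    _ = (∑' j, ent ((μ (F j)).toReal)) + (∑' j, (μ (F j)).toReal) * Real.logb 2 k := by
        rw [Summable.tsum_add hsum (hq_summable.mul_right _), tsum_mul_right]
    _ = (∑' j, ent ((μ (F j)).toReal)) + Real.logb 2 k := by rw [hqsum, one_mul]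

/-- If `ℰ` and `ℱ` are countable partitions such that each element of `ℰ`
intersects at most `k` elements of `ℱ` and vice versa, then for every probability
measure `μ`, `|H(μ,ℰ) − H(μ,ℱ)| ≤ 2 log k`. -/
theorem entropy_diff_of_commensurable_partitions
    {X : Type*} [MeasurableSpace X] (μ : Measure X) [IsProbabilityMeasure μ]
    (E F : ℕ → Set X)
    (hEmeas : ∀ i, MeasurableSet (E i)) (hFmeas : ∀ j, MeasurableSet (F j))
    (hEdisj : Pairwise (Function.onFun Disjoint E))
    (hFdisj : Pairwise (Function.onFun Disjoint F))
    (hEcover : (⋃ i, E i) = Set.univ) (hFcover : (⋃ j, F j) = Set.univ)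
    (k : ℕ) (hk : 1 ≤ k)
    (hEF : ∀ i, ∃ s : Finset ℕ, s.card ≤ k ∧ ∀ j, (E i ∩ F j).Nonempty → j ∈ s)
    (hFE : ∀ j, ∃ s : Finset ℕ, s.card ≤ k ∧ ∀ i, (E i ∩ F j).Nonempty → i ∈ s) :
    |(∑' i, ent ((μ (E i)).toReal)) - ∑' j, ent ((μ (F j)).toReal)| ≤
      2 * Real.logb 2 k := by
  have hlogk : 0 ≤ Real.logb 2 k := Real.logb_nonneg (by norm_num) (by exact_mod_cast hk)
  -- swapped-role hypotheses
  have hEF' : ∀ i, ∃ s : Finset ℕ, s.card ≤ k ∧ ∀ j, (F i ∩ E j).Nonempty → j ∈ s := by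
    intro i
    obtain ⟨s, hs, h⟩ := hFE i
    exact ⟨s, hs, fun j hj => h j (by rwa [Set.inter_comm] at hj)⟩
  have hFE' : ∀ j, ∃ s : Finset ℕ, s.card ≤ k ∧ ∀ i, (F i ∩ E j).Nonempty → i ∈ s := by
    intro j
    obtain ⟨s, hs, h⟩ := hEF j
    exact ⟨s, hs, fun i hi => h i (by rwa [Set.inter_comm] at hi)⟩
  by_cases hsum : Summable (fun j => ent ((μ (F j)).toReal))
  · obtain ⟨hEsum, h1⟩ := entropy_key μ E F hEmeas hFmeas hEdisj hFdisj hEcover hFcover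
      k hk hEF hFE hsum
    obtain ⟨_, h2⟩ := entropy_key μ F E hFmeas hEmeas hFdisj hEdisj hFcover hEcover
      k hk hEF' hFE' hEsum
    rw [abs_le]
    constructor <;> linarith
  · -- if the F-side is not summable, neither is the E-side
    have hEsum : ¬ Summable (fun i => ent ((μ (E i)).toReal)) := by
      intro hE
      exact hsum (entropy_key μ F E hFmeas hEmeas hFdisj hEdisj hFcover hEcover
        k hk hEF' hFE' hE).1
    rw [tsum_eq_zero_of_not_summable hsum, tsum_eq_zero_of_not_summable hEsum]
    simpa using by linarith
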